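/- Every finite poset (P,<) has a partition (B,U) of its elements such that the number of pairs (x,y) with x in B, y in U, and x < y is at least half the total number of pairs (x,y) with x < y in P. -/
import Mathlib


open Finset
open scoped Classical

/-- `e X Y` counts pairs `(x,y)` with `x ∈ X`, `y ∈ Y`, `x < y`. -/
noncomputable def e {P : Type*} [Fintype P] [PartialOrder P] (X Y : Finset P) : ℕ :=
  ((X ×ˢ Y).filter fun p => p.1 < p.2).card

section aux

variable {P : Type*} [Fintype P] [PartialOrder P]

/-- number of elements of `S` below `x`, as an integer -/
noncomputable def dd (S : Finset P) (x : P) : ℤ := ((S.filter fun w => w < x).card : ℤ)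

/-- number of elements of `S` above `x`, as an integer -/
noncomputable def uu (S : Finset P) (x : P) : ℤ := ((S.filter fun w => x < w).card : ℤ)

lemma e_rows (X Y : Finset P) : e X Y = ∑ a ∈ X, (Y.filter fun w => a < w).card := by
  rw [e, Finset.card_filter, Finset.sum_product]
  exact Finset.sum_congr rfl fun a _ => (Finset.card_filter _ _).symm

lemma e_cols (X Y : Finset P) : e X Y = ∑ b ∈ Y, (X.filter fun w => w < b).card := by
  rw [e, Finset.card_filter, Finset.sum_product_right]
  exact Finset.sum_congr rfl fun a _ => (Finset.card_filter _ _).symm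

lemma e_rows' (X Y : Finset P) : (e X Y : ℤ) = ∑ a ∈ X, ((Y.filter fun w => a < w).card : ℤ) := by
  rw [e_rows]; push_cast; rfl

lemma e_cols' (X Y : Finset P) : (e X Y : ℤ) = ∑ b ∈ Y, ((X.filter fun w => w < b).card : ℤ) := by
  rw [e_cols]; push_cast; rfl

lemma step {S : Finset P} {w x : P} (hw : w ∈ S) (hx : x ∈ S) (hlt : w < x) :
    uu S x - dd S x ≤ uu S w - dd S w - 2 := by
  have h1 : (S.filter fun v => v < w).card < (S.filter fun v => v < x).card := by
    apply Finset.card_lt_card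
    have hsub : S.filter (fun v => v < w) ⊆ S.filter (fun v => v < x) := by
      intro v hv
      simp only [Finset.mem_filter] at *
      exact ⟨hv.1, hv.2.trans hlt⟩
    refine (Finset.ssubset_iff_of_subset hsub).mpr ⟨w, Finset.mem_filter.mpr ⟨hw, hlt⟩, ?_⟩
    simp [lt_irrefl]
  have h2 : (S.filter fun v => x < v).card < (S.filter fun v => w < v).card := by
    apply Finset.card_lt_card
    have hsub : S.filter (fun v => x < v) ⊆ S.filter (fun v => w < v) := by
      intro v hv
      simp only [Finset.mem_filter] at *
      exact ⟨hv.1, hlt.trans hv.2⟩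
    refine (Finset.ssubset_iff_of_subset hsub).mpr ⟨x, Finset.mem_filter.mpr ⟨hx, hlt⟩, ?_⟩
    simp [lt_irrefl]
  unfold uu dd
  omega

lemma dd_erase {S : Finset P} {x : P} (hx : x ∈ S) (w : P) :
    dd (S.erase x) w = dd S w - if x < w then 1 else 0 := by
  by_cases hc : x < w
  · have hmem : x ∈ S.filter fun v => v < w := Finset.mem_filter.mpr ⟨hx, hc⟩
    rw [dd, dd, Finset.filter_erase, Finset.card_erase_of_mem hmem, if_pos hc]
    have h1 : 1 ≤ (S.filter fun v => v < w).card := Finset.card_pos.mpr ⟨x, hmem⟩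
    push_cast [Nat.cast_sub h1]
    ring
  · rw [dd, dd, Finset.filter_erase, Finset.erase_eq_of_notMem (by simp [hc]), if_neg hc]
    ring

lemma uu_erase {S : Finset P} {x : P} (hx : x ∈ S) (w : P) :
    uu (S.erase x) w = uu S w - if w < x then 1 else 0 := by
  by_cases hc : w < x
  · have hmem : x ∈ S.filter fun v => w < v := Finset.mem_filter.mpr ⟨hx, hc⟩
    rw [uu, uu, Finset.filter_erase, Finset.card_erase_of_mem hmem, if_pos hc]
    have h1 : 1 ≤ (S.filter fun v => w < v).card := Finset.card_pos.mpr ⟨x, hmem⟩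
    push_cast [Nat.cast_sub h1]
    ring
  · rw [uu, uu, Finset.filter_erase, Finset.erase_eq_of_notMem (by simp [hc]), if_neg hc]
    ring

lemma main_ineq (S : Finset P) : (e S S : ℤ) ≤ ∑ x ∈ S, |uu S x - dd S x| := by
  induction S using Finset.strongInduction with
  | _ S ih =>
  rcases S.eq_empty_or_nonempty with rfl | hne
  · simp [e]
  obtain ⟨x, hxS, hmin⟩ := S.exists_min_image (fun w => |uu S w - dd S w|) hne
  set S' := S.erase x with hS'def
  have hxnot : x ∉ S' := Finset.notMem_erase x S
  have hins : insert x S' = S := Finset.insert_erase hxS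
  have IH := ih S' (Finset.erase_ssubset hxS)
  -- sign lemmas
  have below_pos : ∀ w ∈ S, w < x → 1 ≤ uu S w - dd S w := by
    intro w hw hlt
    have h := step hw hxS hlt
    have h2 := hmin w hw
    by_contra hcon
    push_neg at hcon
    have ha : |uu S w - dd S w| = -(uu S w - dd S w) := abs_of_nonpos (by omega)
    have hb := neg_abs_le (uu S x - dd S x)
    linarith
  have above_neg : ∀ w ∈ S, x < w → uu S w - dd S w ≤ -1 := by
    intro w hw hlt
    have h := step hxS hw hlt
    have h2 := hmin w hw
    by_contra hcon
    push_neg at hcon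
    have ha : |uu S w - dd S w| = uu S w - dd S w := abs_of_nonneg (by omega)
    have hb := le_abs_self (uu S x - dd S x)
    linarith
  -- abs erase identity
  have abs_erase : ∀ w ∈ S', |uu S' w - dd S' w| =
      |uu S w - dd S w| - (if x < w then 1 else 0) - (if w < x then 1 else 0) := by
    intro w hw'
    have hwS : w ∈ S := Finset.mem_of_mem_erase hw'
    rw [uu_erase hxS w, dd_erase hxS w]
    by_cases h1 : w < x
    · have h2 : ¬ x < w := asymm h1
      have hp := below_pos w hwS h1
      rw [if_pos h1, if_neg h2, abs_of_nonneg (by omega), abs_of_nonneg (by omega)]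
      ring
    · by_cases h2 : x < w
      · have hp := above_neg w hwS h2
        rw [if_neg h1, if_pos h2, abs_of_nonpos (by omega), abs_of_nonpos (by omega)]
        ring
      · rw [if_neg h1, if_neg h2]
        ring_nf
  -- counting sums over S'
  have sum_below : ∑ w ∈ S', (if w < x then (1:ℤ) else 0) = dd S x := by
    rw [Finset.sum_boole]
    have : dd S' x = dd S x := by rw [dd_erase hxS x, if_neg (lt_irrefl x)]; ring
    rw [← this]; rfl
  have sum_above : ∑ w ∈ S', (if x < w then (1:ℤ) else 0) = uu S x := by
    rw [Finset.sum_boole]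
    have : uu S' x = uu S x := by rw [uu_erase hxS x, if_neg (lt_irrefl x)]; ring
    rw [← this]; rfl
  -- e decomposition
  have e_dec : (e S S : ℤ) = (e S' S' : ℤ) + dd S x + uu S x := by
    have hrow : ∀ a, ((S.filter fun w => a < w).card : ℤ) = uu S' a + (if a < x then 1 else 0) := by
      intro a
      have h := uu_erase hxS a
      have hrfl : uu S a = ((S.filter fun w => a < w).card : ℤ) := rfl
      rw [← hrfl, h]
      ring
    calc (e S S : ℤ) = ∑ a ∈ S, ((S.filter fun w => a < w).card : ℤ) := e_rows' S S
      _ = ((S.filter fun w => x < w).card : ℤ) + ∑ a ∈ S', ((S.filter fun w => a < w).card : ℤ) := by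
          rw [← hins, Finset.sum_insert hxnot]
      _ = uu S x + ∑ a ∈ S', (uu S' a + (if a < x then 1 else 0)) := by
          have hrfl : uu S x = ((S.filter fun w => x < w).card : ℤ) := rfl
          rw [hrfl]
          exact congrArg _ (Finset.sum_congr rfl fun a _ => hrow a)
      _ = uu S x + (∑ a ∈ S', uu S' a) + dd S x := by
          rw [Finset.sum_add_distrib, sum_below]; ring
      _ = (e S' S' : ℤ) + dd S x + uu S x := by
          have h1 : ∑ a ∈ S', uu S' a = ∑ a ∈ S', ((S'.filter fun w => a < w).card : ℤ) :=
            Finset.sum_congr rfl fun a _ => rfl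
          rw [h1, ← e_rows' S' S']
          ring
  -- sum of abs decomposition
  have habs : ∑ w ∈ S, |uu S w - dd S w| =
      |uu S x - dd S x| + (∑ w ∈ S', |uu S' w - dd S' w|) + dd S x + uu S x := by
    calc ∑ w ∈ S, |uu S w - dd S w|
        = |uu S x - dd S x| + ∑ w ∈ S', |uu S w - dd S w| := by
          rw [← hins, Finset.sum_insert hxnot]
      _ = |uu S x - dd S x| + ∑ w ∈ S', (|uu S' w - dd S' w| + (if x < w then 1 else 0)
            + (if w < x then 1 else 0)) := by
          congr 1
          refine Finset.sum_congr rfl fun w hw => ?_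
          rw [abs_erase w hw]; ring
      _ = _ := by
          rw [Finset.sum_add_distrib, Finset.sum_add_distrib, sum_below, sum_above]; ring
  have habsx : (0:ℤ) ≤ |uu S x - dd S x| := abs_nonneg _
  rw [e_dec, habs]
  linarith

lemma e_split_left {X Y Z W : Finset P} (h : Disjoint X Y) (hXY : X ∪ Y = W) :
    (e W Z : ℤ) = e X Z + e Y Z := by
  rw [e_cols' W Z, e_cols' X Z, e_cols' Y Z, ← Finset.sum_add_distrib]
  refine Finset.sum_congr rfl fun b _ => ?_
  rw [← hXY, Finset.filter_union, Finset.card_union_of_disjoint (Finset.disjoint_filter_filter h)]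
  push_cast; ring

lemma e_split_right {X Y Z W : Finset P} (h : Disjoint X Y) (hXY : X ∪ Y = W) :
    (e Z W : ℤ) = e Z X + e Z Y := by
  rw [e_rows' Z W, e_rows' Z X, e_rows' Z Y, ← Finset.sum_add_distrib]
  refine Finset.sum_congr rfl fun b _ => ?_
  rw [← hXY, Finset.filter_union, Finset.card_union_of_disjoint (Finset.disjoint_filter_filter h)]
  push_cast; ring

end aux

/-- Every finite poset has a cut containing at least half of its order relations. -/
theorem large_cut_exists (P : Type*) [Fintype P] [PartialOrder P] :
    ∃ B U : Finset P, Disjoint B U ∧ B ∪ U = Finset.univ ∧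
      e (Finset.univ : Finset P) Finset.univ ≤ 2 * e B U := by
  classical
  set F : Finset P := Finset.univ with hF
  set B : Finset P := F.filter (fun x => 0 < uu F x - dd F x) with hB
  set U : Finset P := F \ B with hU
  have hdisj : Disjoint B U := Finset.disjoint_sdiff
  have hunion : B ∪ U = F := Finset.union_sdiff_of_subset (Finset.filter_subset _ _)
  refine ⟨B, U, hdisj, hunion, ?_⟩
  have hmemB : ∀ x, x ∈ B ↔ 0 < uu F x - dd F x := by
    intro x; simp [hB, hF]
  have hmemU : ∀ x, x ∈ U ↔ ¬ 0 < uu F x - dd F x := by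
    intro x; simp [hU, hB, hF]
  -- no relations from U to B
  have hUB : (e U B : ℤ) = 0 := by
    rw [e_cols' U B]
    refine Finset.sum_eq_zero fun y hy => ?_
    have hyB := (hmemB y).mp hy
    have hempty : U.filter (fun w => w < y) = ∅ := by
      refine Finset.filter_eq_empty_iff.mpr fun w hw => ?_
      intro hlt
      have hstep := step (Finset.mem_univ w) (Finset.mem_univ y) hlt
      have := (hmemU w).mp hw
      rw [← hF] at hstep
      omega
    rw [hempty]; simp
  have h1 : (e F B : ℤ) = e B B + e U B := e_split_left hdisj hunion
  have h2 : (e B F : ℤ) = e B B + e B U := e_split_right hdisj hunion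
  have h3 : (e U F : ℤ) = e U B + e U U := e_split_right hdisj hunion
  have h4 : (e F U : ℤ) = e B U + e U U := e_split_left hdisj hunion
  have h5 : (e F F : ℤ) = e B F + e U F := e_split_left hdisj hunion
  have hFB : (e F B : ℤ) = ∑ x ∈ B, dd F x := by
    rw [e_cols' F B]; exact Finset.sum_congr rfl fun b _ => rfl
  have hBF : (e B F : ℤ) = ∑ x ∈ B, uu F x := by
    rw [e_rows' B F]; exact Finset.sum_congr rfl fun b _ => rfl
  have hFU : (e F U : ℤ) = ∑ x ∈ U, dd F x := by
    rw [e_cols' F U]; exact Finset.sum_congr rfl fun b _ => rfl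
  have hUF : (e U F : ℤ) = ∑ x ∈ U, uu F x := by
    rw [e_rows' U F]; exact Finset.sum_congr rfl fun b _ => rfl
  -- 2 * e B U = ∑ |s|
  have hBU1 : (e B U : ℤ) = ∑ x ∈ B, (uu F x - dd F x) := by
    have : (e B U : ℤ) = e B F - e F B := by rw [h2, h1, hUB]; ring
    rw [this, hBF, hFB, ← Finset.sum_sub_distrib]
  have hBU2 : (e B U : ℤ) = ∑ x ∈ U, (dd F x - uu F x) := by
    have : (e B U : ℤ) = e F U - e U F := by rw [h4, h3, hUB]; ring
    rw [this, hFU, hUF, ← Finset.sum_sub_distrib]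
  have habsB : ∑ x ∈ B, (uu F x - dd F x) = ∑ x ∈ B, |uu F x - dd F x| := by
    refine Finset.sum_congr rfl fun x hx => ?_
    exact (abs_of_pos ((hmemB x).mp hx)).symm
  have habsU : ∑ x ∈ U, (dd F x - uu F x) = ∑ x ∈ U, |uu F x - dd F x| := by
    refine Finset.sum_congr rfl fun x hx => ?_
    have := (hmemU x).mp hx
    rw [abs_of_nonpos (by omega)]; ring
  have hsplitabs : ∑ x ∈ F, |uu F x - dd F x|
      = ∑ x ∈ B, |uu F x - dd F x| + ∑ x ∈ U, |uu F x - dd F x| := by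
    rw [← hunion, Finset.sum_union hdisj]
  have hkey : (2:ℤ) * e B U = ∑ x ∈ F, |uu F x - dd F x| := by
    rw [hsplitabs, ← habsB, ← habsU, two_mul]
    nth_rewrite 1 [hBU1]
    rw [hBU2]
  have hmain := main_ineq F
  have : (e F F : ℤ) ≤ 2 * e B U := by rw [hkey]; exact hmain
  exact_mod_cast this
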